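/- For g, h in Thompson's group T, define gv(g,h) = Σ_{x∈𝕋} ( log₂ h'_r(x) · Δlog₂ (g∘h)'_r(x) − Δlog₂ h'_r(x) · log₂ (g∘h)'_r(x) ). Then for each g, h the summand vanishes for all but finitely many x ∈ 𝕋, so gv(g,h) is a well-defined integer; and gv : T × T → ℤ is a 2-cocycle for the trivial action of T on ℤ, i.e. for all g, h, k ∈ T one has gv(h,k) − gv(g∘h, k) + gv(g, h∘k) − gv(g,h) = 0. -/

import Mathlib

noncomputable section
open Classical

/-- The circle `𝕋 = ℝ/ℤ`. -/
abbrev Circle𝕋 := AddCircle (1 : ℝ)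

/-- A real number is dyadic if it belongs to `ℤ[1/2]`. -/
def IsDyadic (x : ℝ) : Prop := ∃ (p : ℤ) (n : ℕ), x = (p : ℝ) / 2 ^ n

/-- `φ : ℝ → ℝ` is a lift of a piecewise dyadic affine homeomorphism of the circle. -/
def IsPDALift (φ : ℝ → ℝ) : Prop :=
  StrictMono φ ∧ Function.Surjective φ ∧ (∀ x : ℝ, φ (x + 1) = φ x + 1) ∧
  IsDyadic (φ 0) ∧
  ∃ B : Finset ℝ, (↑B : Set ℝ) ⊆ Set.Ico (0 : ℝ) 1 ∧ (∀ b ∈ B, IsDyadic b) ∧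
    ∀ u v : ℝ, u < v → (∀ c ∈ B, ∀ k : ℤ, c + (k : ℝ) ∉ Set.Ioo u v) →
      ∃ n : ℤ, ∀ x ∈ Set.Ioo u v, ∀ y ∈ Set.Ioo u v, φ x - φ y = (2 : ℝ) ^ n * (x - y)

/-- A homeomorphism of the circle is piecewise dyadic affine if it admits a suitable lift. -/
def IsPDA (g : Homeomorph Circle𝕋 Circle𝕋) : Prop :=
  ∃ φ : ℝ → ℝ, IsPDALift φ ∧ ∀ x : ℝ, g ((x : ℝ) : Circle𝕋) = ((φ x : ℝ) : Circle𝕋)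

/-- The right derivative of `g` at `x ∈ 𝕋` equals `2 ^ n`: some lift `φ` of `g` is affine
with slope `2 ^ n` on a small interval to the right of a representative `r` of `x`. -/
def HasRightSlope (g : Homeomorph Circle𝕋 Circle𝕋) (x : Circle𝕋) (n : ℤ) : Prop :=
  ∃ (r : ℝ) (φ : ℝ → ℝ), IsPDALift φ ∧ (∀ y : ℝ, g ((y : ℝ) : Circle𝕋) = ((φ y : ℝ) : Circle𝕋)) ∧
    ((r : ℝ) : Circle𝕋) = x ∧
    ∃ ε > (0 : ℝ), ∀ y ∈ Set.Icc r (r + ε), φ y = φ r + (2 : ℝ) ^ n * (y - r)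

/-- The left derivative of `g` at `x ∈ 𝕋` equals `2 ^ n`. -/
def HasLeftSlope (g : Homeomorph Circle𝕋 Circle𝕋) (x : Circle𝕋) (n : ℤ) : Prop :=
  ∃ (r : ℝ) (φ : ℝ → ℝ), IsPDALift φ ∧ (∀ y : ℝ, g ((y : ℝ) : Circle𝕋) = ((φ y : ℝ) : Circle𝕋)) ∧
    ((r : ℝ) : Circle𝕋) = x ∧
    ∃ ε > (0 : ℝ), ∀ y ∈ Set.Icc (r - ε) r, φ y = φ r + (2 : ℝ) ^ n * (y - r)

/-- `log₂ g'_r(x)`: the base-2 logarithm of the right derivative of `g` at `x`. -/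
noncomputable def logRightDeriv (g : Homeomorph Circle𝕋 Circle𝕋) (x : Circle𝕋) : ℤ :=
  if h : ∃ n : ℤ, HasRightSlope g x n then h.choose else 0

/-- `log₂ g'_l(x)`: the base-2 logarithm of the left derivative of `g` at `x`. -/
noncomputable def logLeftDeriv (g : Homeomorph Circle𝕋 Circle𝕋) (x : Circle𝕋) : ℤ :=
  if h : ∃ n : ℤ, HasLeftSlope g x n then h.choose else 0

/-- `Δlog₂ g'_r(x) = log₂ g'_r(x) − log₂ g'_l(x)`. -/
noncomputable def deltaLog (g : Homeomorph Circle𝕋 Circle𝕋) (x : Circle𝕋) : ℤ :=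
  logRightDeriv g x - logLeftDeriv g x

/-- The summand of the Ghys–Sergiescu cocycle:
`log₂ h'_r(x) · Δlog₂ (g∘h)'_r(x) − Δlog₂ h'_r(x) · log₂ (g∘h)'_r(x)`.
(Here `h.trans g` is the composition `g ∘ h`.) -/
noncomputable def gvSummand (g h : Homeomorph Circle𝕋 Circle𝕋) (x : Circle𝕋) : ℤ :=
  logRightDeriv h x * deltaLog (h.trans g) x - deltaLog h x * logRightDeriv (h.trans g) x

/-- `gv(g,h) = Σ_{x∈𝕋} (log₂ h'_r(x) · Δlog₂ (g∘h)'_r(x) − Δlog₂ h'_r(x) · log₂ (g∘h)'_r(x))`. -/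
noncomputable def gv (g h : Homeomorph Circle𝕋 Circle𝕋) : ℤ :=
  ∑ᶠ x : Circle𝕋, gvSummand g h x

namespace GVAux

lemma dyadic_add {x y : ℝ} (hx : IsDyadic x) (hy : IsDyadic y) : IsDyadic (x + y) := by
  obtain ⟨p, a, rfl⟩ := hx; obtain ⟨q, b, rfl⟩ := hy
  refine ⟨p * 2 ^ b + q * 2 ^ a, a + b, ?_⟩
  push_cast
  rw [pow_add]
  field_simp

lemma dyadic_neg {x : ℝ} (hx : IsDyadic x) : IsDyadic (-x) := by
  obtain ⟨p, a, rfl⟩ := hx; exact ⟨-p, a, by push_cast; ring⟩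

lemma dyadic_sub {x y : ℝ} (hx : IsDyadic x) (hy : IsDyadic y) : IsDyadic (x - y) := by
  rw [sub_eq_add_neg]; exact dyadic_add hx (dyadic_neg hy)

lemma dyadic_int (k : ℤ) : IsDyadic (k : ℝ) := ⟨k, 0, by norm_num⟩

lemma dyadic_zpow_mul (n : ℤ) {x : ℝ} (hx : IsDyadic x) : IsDyadic ((2 : ℝ) ^ n * x) := by
  obtain ⟨p, a, rfl⟩ := hx
  rcases le_or_gt 0 n with hn | hn
  · obtain ⟨m, rfl⟩ := Int.eq_ofNat_of_zero_le hn
    refine ⟨p * 2 ^ m, a, ?_⟩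
    push_cast
    rw [zpow_natCast]
    field_simp
  · obtain ⟨m, rfl⟩ : ∃ m : ℕ, n = -(m : ℤ) := ⟨n.natAbs, by omega⟩
    refine ⟨p, a + m, ?_⟩
    rw [zpow_neg, zpow_natCast, pow_add]
    field_simp

lemma exists_dyadic_mem_Ioo {u v : ℝ} (h : u < v) : ∃ d, IsDyadic d ∧ d ∈ Set.Ioo u v := by
  obtain ⟨N, hN⟩ := exists_pow_lt_of_lt_one (sub_pos.mpr h) (by norm_num : (1:ℝ)/2 < 1)
  have h2 : (0:ℝ) < 2 ^ N := by positivity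
  have h3 : (1:ℝ)/2^N < v - u := by rw [← one_div_pow]; exact hN
  have h4 : (1:ℝ) < (v - u) * 2 ^ N := (div_lt_iff₀ h2).mp h3
  refine ⟨(⌊u * 2 ^ N⌋ + 1) / 2 ^ N, ⟨⌊u * 2 ^ N⌋ + 1, N, by push_cast; ring⟩, ?_, ?_⟩
  · rw [lt_div_iff₀ h2]
    have := Int.lt_floor_add_one (u * 2 ^ N)
    push_cast
    linarith
  · rw [div_lt_iff₀ h2]
    have h1 := Int.floor_le (u * 2 ^ N)
    nlinarith

lemma lift_continuous {φ : ℝ → ℝ} (hφ : IsPDALift φ) : Continuous φ :=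
  (hφ.1.orderIsoOfSurjective φ hφ.2.1).toHomeomorph.continuous

lemma lift_add_int {φ : ℝ → ℝ} (hφ : IsPDALift φ) (x : ℝ) (k : ℤ) :
    φ (x + k) = φ x + k := by
  obtain ⟨-, -, hper, -⟩ := hφ
  induction k using Int.induction_on with
  | zero => simp
  | succ m ih =>
      rw [show (((m:ℤ) + 1 : ℤ) : ℝ) = (m:ℝ) + 1 from by push_cast; ring]
      rw [show ((m:ℤ) : ℝ) = (m:ℝ) from by push_cast; ring] at ih
      rw [show x + ((m:ℝ) + 1) = (x + m) + 1 from by ring, hper, ih]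
      ring
  | pred m ih =>
      have key := hper (x + (-(m:ℝ) - 1))
      rw [show x + (-(m:ℝ) - 1) + 1 = x + -(m:ℝ) from by ring] at key
      rw [show ((-(m:ℤ) - 1 : ℤ) : ℝ) = -(m:ℝ) - 1 from by push_cast; ring]
      rw [show ((-(m:ℤ) : ℤ) : ℝ) = -(m:ℝ) from by push_cast; ring] at ih
      linarith

lemma exists_free_right (B : Finset ℝ) (r : ℝ) :
    ∃ ε > (0:ℝ), ∀ c ∈ B, ∀ k : ℤ, c + (k : ℝ) ∉ Set.Ioo r (r + ε) := by
  classical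
  set f : ℝ → ℝ := fun c => c + (⌊r - c⌋ + 1 : ℤ) - r with hf
  have hfpos : ∀ c : ℝ, 0 < f c := by
    intro c
    have := Int.lt_floor_add_one (r - c)
    simp only [hf]
    push_cast
    linarith
  set T : Finset ℝ := insert 1 (B.image f) with hT
  have hTne : T.Nonempty := ⟨1, Finset.mem_insert_self _ _⟩
  refine ⟨T.min' hTne, ?_, ?_⟩
  · apply lt_of_lt_of_le ?_ (le_refl _)
    have : ∀ x ∈ T, (0:ℝ) < x := by
      intro x hx
      rcases Finset.mem_insert.mp hx with h | h
      · simp [h]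
      · obtain ⟨c, -, rfl⟩ := Finset.mem_image.mp h
        exact hfpos c
    exact this _ (T.min'_mem hTne)
  · rintro c hc k ⟨h1, h2⟩
    have hk : (⌊r - c⌋ + 1 : ℤ) ≤ k := by
      have : r - c < k := by linarith
      have := Int.floor_lt.mpr this
      omega
    have : r + f c ≤ c + k := by
      simp only [hf]
      push_cast
      have : ((⌊r - c⌋ + 1 : ℤ) : ℝ) ≤ k := by exact_mod_cast hk
      push_cast at this
      linarith
    have hmin : T.min' hTne ≤ f c :=
      T.min'_le _ (Finset.mem_insert_of_mem (Finset.mem_image_of_mem f hc))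
    linarith

lemma exists_free_left (B : Finset ℝ) (r : ℝ) :
    ∃ ε > (0:ℝ), ∀ c ∈ B, ∀ k : ℤ, c + (k : ℝ) ∉ Set.Ioo (r - ε) r := by
  classical
  set f : ℝ → ℝ := fun c => r - (c + (⌈r - c⌉ - 1 : ℤ)) with hf
  have hfpos : ∀ c : ℝ, 0 < f c := by
    intro c
    have := Int.ceil_lt_add_one (r - c)
    simp only [hf]
    push_cast
    linarith
  set T : Finset ℝ := insert 1 (B.image f) with hT
  have hTne : T.Nonempty := ⟨1, Finset.mem_insert_self _ _⟩
  refine ⟨T.min' hTne, ?_, ?_⟩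
  · have : ∀ x ∈ T, (0:ℝ) < x := by
      intro x hx
      rcases Finset.mem_insert.mp hx with h | h
      · simp [h]
      · obtain ⟨c, -, rfl⟩ := Finset.mem_image.mp h
        exact hfpos c
    exact this _ (T.min'_mem hTne)
  · rintro c hc k ⟨h1, h2⟩
    have hk : k ≤ (⌈r - c⌉ - 1 : ℤ) := by
      have : (k:ℝ) < r - c := by linarith
      have := Int.lt_ceil.mpr this
      omega
    have : c + (k:ℝ) ≤ r - f c := by
      simp only [hf]
      have : ((k:ℤ) : ℝ) ≤ ((⌈r - c⌉ - 1 : ℤ) : ℝ) := by exact_mod_cast hk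
      push_cast at this ⊢
      linarith
    have hmin : T.min' hTne ≤ f c :=
      T.min'_le _ (Finset.mem_insert_of_mem (Finset.mem_image_of_mem f hc))
    linarith

lemma exists_free_around (B : Finset ℝ) (r : ℝ)
    (hr : ∀ c ∈ B, ∀ k : ℤ, c + (k : ℝ) ≠ r) :
    ∃ ε > (0:ℝ), ∀ c ∈ B, ∀ k : ℤ, c + (k : ℝ) ∉ Set.Ioo (r - ε) (r + ε) := by
  obtain ⟨ε₁, hε₁, h₁⟩ := exists_free_right B r
  obtain ⟨ε₂, hε₂, h₂⟩ := exists_free_left B r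
  refine ⟨min ε₁ ε₂, lt_min hε₁ hε₂, ?_⟩
  rintro c hc k ⟨hl, hu⟩
  rcases lt_trichotomy (c + (k:ℝ)) r with h | h | h
  · exact h₂ c hc k ⟨by have := min_le_right ε₁ ε₂; linarith, h⟩
  · exact hr c hc k h
  · exact h₁ c hc k ⟨h, by have := min_le_left ε₁ ε₂; linarith⟩

lemma affine_Icc {φ : ℝ → ℝ} (hcont : Continuous φ) {u v : ℝ} (huv : u < v) {n : ℤ}
    (h : ∀ x ∈ Set.Ioo u v, ∀ y ∈ Set.Ioo u v, φ x - φ y = (2:ℝ) ^ n * (x - y)) :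
    ∀ x ∈ Set.Icc u v, ∀ y ∈ Set.Icc u v, φ x - φ y = (2:ℝ) ^ n * (x - y) := by
  set m := (u + v) / 2 with hm
  have hmem : m ∈ Set.Ioo u v := ⟨by simp only [hm]; linarith, by simp only [hm]; linarith⟩
  set g : ℝ → ℝ := fun x => φ m + (2:ℝ) ^ n * (x - m) with hg
  have hgc : Continuous g := by
    simp only [hg]; continuity
  have heq : Set.EqOn φ g (Set.Ioo u v) := by
    intro x hx
    have := h x hx m hmem
    simp only [hg]
    linarith
  have hcl : Set.EqOn φ g (closure (Set.Ioo u v)) := heq.closure hcont hgc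
  rw [closure_Ioo huv.ne] at hcl
  intro x hx y hy
  rw [hcl hx, hcl hy]
  simp only [hg]
  ring

lemma sub_int_of_coe_eq {a b : ℝ} (h : ((a:ℝ) : Circle𝕋) = ((b:ℝ) : Circle𝕋)) :
    ∃ k : ℤ, b = a + k := by
  have := QuotientAddGroup.eq_iff_sub_mem.mp h
  rw [AddSubgroup.mem_zmultiples_iff] at this
  obtain ⟨k, hk⟩ := this
  rw [zsmul_eq_mul, mul_one] at hk
  exact ⟨-k, by push_cast; linarith⟩

lemma coe_add_int (c : ℝ) (k : ℤ) : ((c + (k:ℝ) : ℝ) : Circle𝕋) = ((c:ℝ) : Circle𝕋) := by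
  rw [QuotientAddGroup.eq_iff_sub_mem, AddSubgroup.mem_zmultiples_iff]
  exact ⟨k, by rw [zsmul_eq_mul, mul_one]; ring⟩

/-- Around any point free of breakpoint translates... general: affine near any rep. -/
lemma slope_from_interval {g : Homeomorph Circle𝕋 Circle𝕋} {φ : ℝ → ℝ} (hφ : IsPDALift φ)
    (hl : ∀ y : ℝ, g ((y : ℝ) : Circle𝕋) = ((φ y : ℝ) : Circle𝕋)) {x : Circle𝕋} {r : ℝ}
    (hr : ((r : ℝ) : Circle𝕋) = x) :
    (∃ n, HasRightSlope g x n) ∧ (∃ n, HasLeftSlope g x n) := by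
  obtain ⟨B, hB1, hB2, hB3⟩ := hφ.2.2.2.2
  constructor
  · obtain ⟨ε, hε, hfree⟩ := exists_free_right B r
    obtain ⟨n, hn⟩ := hB3 r (r + ε) (by linarith) hfree
    have haff := affine_Icc (lift_continuous hφ) (by linarith : r < r + ε) hn
    refine ⟨n, r, φ, hφ, hl, hr, ε, hε, ?_⟩
    intro y hy
    have := haff y hy r ⟨le_refl r, by linarith⟩
    linarith
  · obtain ⟨ε, hε, hfree⟩ := exists_free_left B r
    obtain ⟨n, hn⟩ := hB3 (r - ε) r (by linarith) hfree
    have haff := affine_Icc (lift_continuous hφ) (by linarith : r - ε < r) hn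
    refine ⟨n, r, φ, hφ, hl, hr, ε, hε, ?_⟩
    intro y hy
    have := haff y hy r ⟨by linarith, le_refl r⟩
    linarith

lemma exists_rightSlope {g : Homeomorph Circle𝕋 Circle𝕋} (hg : IsPDA g) (x : Circle𝕋) :
    ∃ n, HasRightSlope g x n := by
  obtain ⟨φ, hφ, hl⟩ := hg
  obtain ⟨r, hr⟩ : ∃ r : ℝ, ((r:ℝ) : Circle𝕋) = x := Quotient.exists_rep x
  exact (slope_from_interval hφ hl hr).1

lemma exists_leftSlope {g : Homeomorph Circle𝕋 Circle𝕋} (hg : IsPDA g) (x : Circle𝕋) :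
    ∃ n, HasLeftSlope g x n := by
  obtain ⟨φ, hφ, hl⟩ := hg
  obtain ⟨r, hr⟩ : ∃ r : ℝ, ((r:ℝ) : Circle𝕋) = x := Quotient.exists_rep x
  exact (slope_from_interval hφ hl hr).2

lemma int_valued_small {a δ : ℝ} (ha : a ≠ 0) (hδ : 0 < δ) (m : ℤ)
    (hm : (m : ℝ) = a * min δ (1 / (2 * |a|))) : False := by
  have habs : 0 < |a| := abs_pos.mpr ha
  have hd : 0 < min δ (1 / (2 * |a|)) := lt_min hδ (by positivity)
  have h1 : |(m:ℝ)| ≤ |a| * (1 / (2 * |a|)) := by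
    rw [hm, abs_mul]
    have : |min δ (1 / (2 * |a|))| = min δ (1 / (2 * |a|)) := abs_of_pos hd
    rw [this]
    exact mul_le_mul_of_nonneg_left (min_le_right _ _) (abs_nonneg a)
  have h2 : |a| * (1 / (2 * |a|)) = 1/2 := by field_simp
  have hm0 : m ≠ 0 := by
    intro h0
    rw [h0, Int.cast_zero] at hm
    exact (mul_ne_zero ha (ne_of_gt hd)) hm.symm
  have : (1:ℝ) ≤ |(m:ℝ)| := by exact_mod_cast Int.one_le_abs (by omega)
  rw [h2] at h1
  linarith

lemma rightSlope_unique {g : Homeomorph Circle𝕋 Circle𝕋} {x : Circle𝕋} {n n' : ℤ}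
    (h1 : HasRightSlope g x n) (h2 : HasRightSlope g x n') : n = n' := by
  obtain ⟨r, φ, hφ, hl, hrx, ε, hε, haff⟩ := h1
  obtain ⟨r', φ', hφ', hl', hrx', ε', hε', haff'⟩ := h2
  obtain ⟨k, hk⟩ := sub_int_of_coe_eq (hrx.trans hrx'.symm)
  -- φ' is affine with slope 2^n' on [r, r+ε']
  have haff'' : ∀ y ∈ Set.Icc r (r + ε'), φ' y = (φ' r' - k) + (2:ℝ) ^ n' * (y - r) := by
    intro y hy
    have hyk : y + (k:ℝ) ∈ Set.Icc r' (r' + ε') := by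
      constructor
      · rw [hk]; linarith [hy.1]
      · rw [hk]; linarith [hy.2]
    have := haff' (y + k) hyk
    rw [lift_add_int hφ' y k] at this
    rw [hk] at this ⊢
    push_cast at this ⊢
    linarith [this]
  -- differences are integers
  have hint : ∀ y : ℝ, ∃ m : ℤ, φ' y - φ y = m := by
    intro y
    have e1 : ((φ y : ℝ) : Circle𝕋) = ((φ' y : ℝ) : Circle𝕋) := by
      rw [← hl y, ← hl' y]
    obtain ⟨m, hm⟩ := sub_int_of_coe_eq e1
    exact ⟨m, by linarith [hm]⟩
  by_contra hne
  set a : ℝ := (2:ℝ) ^ n' - (2:ℝ) ^ n with haeq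
  have ha : a ≠ 0 := by
    simp only [haeq, sub_ne_zero]
    intro hcontra
    exact hne (zpow_right_injective₀ (by norm_num) (by norm_num) hcontra.symm)
  set δ0 : ℝ := min ε ε' with hδ0
  have hδ0pos : 0 < δ0 := lt_min hε hε'
  set t : ℝ := min δ0 (1 / (2 * |a|)) with ht
  have htpos : 0 < t := lt_min hδ0pos (by positivity)
  have htle : t ≤ δ0 := min_le_left _ _
  have hy1 : r + t ∈ Set.Icc r (r + ε) := ⟨by linarith, by simp only [hδ0] at htle; have := min_le_left ε ε'; linarith⟩
  have hy1' : r + t ∈ Set.Icc r (r + ε') := ⟨by linarith, by simp only [hδ0] at htle; have := min_le_right ε ε'; linarith⟩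
  have hr1 : r ∈ Set.Icc r (r + ε) := ⟨le_refl _, by linarith⟩
  have hr1' : r ∈ Set.Icc r (r + ε') := ⟨le_refl _, by linarith⟩
  obtain ⟨m1, hm1⟩ := hint (r + t)
  obtain ⟨m0, hm0⟩ := hint r
  have e1 := haff (r + t) hy1
  have e2 := haff'' (r + t) hy1'
  have e3 := haff r hr1
  have e4 := haff'' r hr1'
  apply int_valued_small ha hδ0pos (m1 - m0)
  push_cast
  rw [← ht]
  have : φ' (r + t) - φ (r + t) - (φ' r - φ r) = a * t := by
    rw [e1, e2, e3, e4]
    simp only [haeq]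
    ring
  linarith [hm1, hm0, this]

lemma leftSlope_unique {g : Homeomorph Circle𝕋 Circle𝕋} {x : Circle𝕋} {n n' : ℤ}
    (h1 : HasLeftSlope g x n) (h2 : HasLeftSlope g x n') : n = n' := by
  obtain ⟨r, φ, hφ, hl, hrx, ε, hε, haff⟩ := h1
  obtain ⟨r', φ', hφ', hl', hrx', ε', hε', haff'⟩ := h2
  obtain ⟨k, hk⟩ := sub_int_of_coe_eq (hrx.trans hrx'.symm)
  have haff'' : ∀ y ∈ Set.Icc (r - ε') r, φ' y = (φ' r' - k) + (2:ℝ) ^ n' * (y - r) := by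
    intro y hy
    have hyk : y + (k:ℝ) ∈ Set.Icc (r' - ε') r' := by
      constructor
      · rw [hk]; linarith [hy.1]
      · rw [hk]; linarith [hy.2]
    have := haff' (y + k) hyk
    rw [lift_add_int hφ' y k] at this
    rw [hk] at this ⊢
    push_cast at this ⊢
    linarith [this]
  have hint : ∀ y : ℝ, ∃ m : ℤ, φ' y - φ y = m := by
    intro y
    have e1 : ((φ y : ℝ) : Circle𝕋) = ((φ' y : ℝ) : Circle𝕋) := by
      rw [← hl y, ← hl' y]
    obtain ⟨m, hm⟩ := sub_int_of_coe_eq e1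
    exact ⟨m, by linarith [hm]⟩
  by_contra hne
  set a : ℝ := (2:ℝ) ^ n - (2:ℝ) ^ n' with haeq
  have ha : a ≠ 0 := by
    simp only [haeq, sub_ne_zero]
    intro hcontra
    exact hne (zpow_right_injective₀ (by norm_num) (by norm_num) hcontra)
  set δ0 : ℝ := min ε ε' with hδ0
  have hδ0pos : 0 < δ0 := lt_min hε hε'
  set t : ℝ := min δ0 (1 / (2 * |a|)) with ht
  have htpos : 0 < t := lt_min hδ0pos (by positivity)
  have htle : t ≤ δ0 := min_le_left _ _
  have hy1 : r - t ∈ Set.Icc (r - ε) r := ⟨by simp only [hδ0] at htle; have := min_le_left ε ε'; linarith, by linarith⟩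
  have hy1' : r - t ∈ Set.Icc (r - ε') r := ⟨by simp only [hδ0] at htle; have := min_le_right ε ε'; linarith, by linarith⟩
  have hr1 : r ∈ Set.Icc (r - ε) r := ⟨by linarith, le_refl _⟩
  have hr1' : r ∈ Set.Icc (r - ε') r := ⟨by linarith, le_refl _⟩
  obtain ⟨m1, hm1⟩ := hint (r - t)
  obtain ⟨m0, hm0⟩ := hint r
  have e1 := haff (r - t) hy1
  have e2 := haff'' (r - t) hy1'
  have e3 := haff r hr1
  have e4 := haff'' r hr1'
  apply int_valued_small ha hδ0pos (m1 - m0)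
  push_cast
  rw [← ht]
  have : φ' (r - t) - φ (r - t) - (φ' r - φ r) = a * t := by
    rw [e1, e2, e3, e4]
    simp only [haeq]
    ring
  linarith [hm1, hm0, this]

/-- Translates of breakpoints lying in `(u,v)`. -/
def Tr (B : Finset ℝ) (u v : ℝ) : Finset ℝ :=
  ((B ×ˢ Finset.Icc (⌈u⌉ - 1) (⌈v⌉ + 1)).image (fun p => p.1 + (p.2 : ℝ))).filter
    (fun x => u < x ∧ x < v)

lemma mem_Tr {B : Finset ℝ} (hB : (↑B : Set ℝ) ⊆ Set.Ico (0:ℝ) 1) {u v x : ℝ} :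
    x ∈ Tr B u v ↔ (∃ c ∈ B, ∃ k : ℤ, x = c + k) ∧ u < x ∧ x < v := by
  constructor
  · intro hx
    rw [Tr, Finset.mem_filter] at hx
    obtain ⟨hx1, hx2⟩ := hx
    obtain ⟨⟨c, k⟩, hmem, rfl⟩ := Finset.mem_image.mp hx1
    rw [Finset.mem_product] at hmem
    exact ⟨⟨c, hmem.1, k, rfl⟩, hx2⟩
  · rintro ⟨⟨c, hc, k, rfl⟩, h1, h2⟩
    rw [Tr, Finset.mem_filter]
    refine ⟨Finset.mem_image.mpr ⟨(c, k), ?_, rfl⟩, h1, h2⟩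
    rw [Finset.mem_product]
    refine ⟨hc, Finset.mem_Icc.mpr ⟨?_, ?_⟩⟩
    · have hc1 : c < 1 := (hB hc).2
      have h3 : u ≤ ((k + 1 : ℤ) : ℝ) := by push_cast; linarith
      have := Int.ceil_le.mpr h3
      omega
    · have hc0 : 0 ≤ c := (hB hc).1
      have h3 : (k:ℝ) ≤ v := by linarith
      have h4 : (k:ℤ) ≤ ⌈v⌉ := by
        have h5 := Int.le_ceil v
        exact_mod_cast le_trans h3 h5
      omega

lemma dyadic_step {φ : ℝ → ℝ} (hφ : IsPDALift φ) {B : Finset ℝ}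
    (hB1 : (↑B : Set ℝ) ⊆ Set.Ico (0:ℝ) 1)
    (hB3 : ∀ u v : ℝ, u < v → (∀ c ∈ B, ∀ k : ℤ, c + (k : ℝ) ∉ Set.Ioo u v) →
      ∃ n : ℤ, ∀ x ∈ Set.Ioo u v, ∀ y ∈ Set.Ioo u v, φ x - φ y = (2 : ℝ) ^ n * (x - y))
    {u v : ℝ} (huv : u < v) (hemp : Tr B u v = ∅)
    (hu : IsDyadic u) (hv : IsDyadic v) (hφu : IsDyadic (φ u)) : IsDyadic (φ v) := by
  have hfree : ∀ c ∈ B, ∀ k : ℤ, c + (k:ℝ) ∉ Set.Ioo u v := by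
    intro c hc k hk
    have : c + (k:ℝ) ∈ Tr B u v := (mem_Tr hB1).mpr ⟨⟨c, hc, k, rfl⟩, hk.1, hk.2⟩
    rw [hemp] at this
    exact absurd this (Finset.notMem_empty _)
  obtain ⟨n, hn⟩ := hB3 u v huv hfree
  have haff := affine_Icc (lift_continuous hφ) huv hn
  have hval : φ v = φ u + (2:ℝ) ^ n * (v - u) := by
    have := haff v ⟨le_of_lt huv, le_refl _⟩ u ⟨le_refl _, le_of_lt huv⟩
    linarith
  rw [hval]
  exact dyadic_add hφu (dyadic_zpow_mul n (dyadic_sub hv hu))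

lemma dyadic_image_aux {φ : ℝ → ℝ} (hφ : IsPDALift φ) {B : Finset ℝ}
    (hB1 : (↑B : Set ℝ) ⊆ Set.Ico (0:ℝ) 1) (hB2 : ∀ b ∈ B, IsDyadic b)
    (hB3 : ∀ u v : ℝ, u < v → (∀ c ∈ B, ∀ k : ℤ, c + (k : ℝ) ∉ Set.Ioo u v) →
      ∃ n : ℤ, ∀ x ∈ Set.Ioo u v, ∀ y ∈ Set.Ioo u v, φ x - φ y = (2 : ℝ) ^ n * (x - y)) :
    ∀ N : ℕ, ∀ u v : ℝ, (Tr B u v).card ≤ N → u < v → IsDyadic u → IsDyadic v →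
      IsDyadic (φ u) → IsDyadic (φ v) := by
  intro N
  induction N with
  | zero =>
    intro u v hcard huv hu hv hφu
    have hemp : Tr B u v = ∅ := Finset.card_eq_zero.mp (Nat.le_zero.mp hcard)
    exact dyadic_step hφ hB1 hB3 huv hemp hu hv hφu
  | succ N ih =>
    intro u v hcard huv hu hv hφu
    by_cases hemp : Tr B u v = ∅
    · exact dyadic_step hφ hB1 hB3 huv hemp hu hv hφu
    · obtain ⟨c, hc⟩ := Finset.nonempty_iff_ne_empty.mpr hemp
      obtain ⟨⟨b, hb, k, rfl⟩, h1, h2⟩ := (mem_Tr hB1).mp hc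
      have hcd : IsDyadic (b + (k:ℝ)) := dyadic_add (hB2 b hb) (dyadic_int k)
      have hsub1 : Tr B u (b + k) ⊆ (Tr B u v).erase (b + (k:ℝ)) := by
        intro x hx
        obtain ⟨hx1, hx2, hx3⟩ := (mem_Tr hB1).mp hx
        exact Finset.mem_erase.mpr ⟨ne_of_lt hx3, (mem_Tr hB1).mpr ⟨hx1, hx2, lt_trans hx3 h2⟩⟩
      have hsub2 : Tr B (b + k) v ⊆ (Tr B u v).erase (b + (k:ℝ)) := by
        intro x hx
        obtain ⟨hx1, hx2, hx3⟩ := (mem_Tr hB1).mp hx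
        exact Finset.mem_erase.mpr ⟨(ne_of_lt hx2).symm, (mem_Tr hB1).mpr ⟨hx1, lt_trans h1 hx2, hx3⟩⟩
      have hcard' := Finset.card_erase_of_mem hc
      have hc1 : (Tr B u (b + k)).card ≤ N := by
        have := Finset.card_le_card hsub1
        omega
      have hc2 : (Tr B (b + k) v).card ≤ N := by
        have := Finset.card_le_card hsub2
        omega
      have hmid := ih u (b + k) hc1 h1 hu hcd hφu
      exact ih (b + k) v hc2 h2 hcd hv hmid

lemma dyadic_image {φ : ℝ → ℝ} (hφ : IsPDALift φ) {x : ℝ} (hx : IsDyadic x) :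
    IsDyadic (φ x) := by
  obtain ⟨B, hB1, hB2, hB3⟩ := hφ.2.2.2.2
  have h0 : IsDyadic (φ 0) := hφ.2.2.2.1
  set k := ⌊x⌋ with hk
  have hrw : x = (x - k) + (k:ℝ) := by ring
  rw [hrw, lift_add_int hφ _ k]
  apply dyadic_add ?_ (dyadic_int k)
  have hyd : IsDyadic (x - k) := dyadic_sub hx (dyadic_int k)
  have hge : (0:ℝ) ≤ x - k := by
    have := Int.floor_le x
    simp only [hk]
    linarith
  rcases eq_or_lt_of_le hge with h | h
  · rw [← h]; exact h0
  · exact dyadic_image_aux hφ hB1 hB2 hB3 (Tr B 0 (x - k)).card 0 (x - k) (le_refl _) h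
      ⟨0, 0, by norm_num⟩ hyd h0

lemma dyadic_preimage {φ : ℝ → ℝ} (hφ : IsPDALift φ) {x : ℝ} (hx : IsDyadic (φ x)) :
    IsDyadic x := by
  obtain ⟨B, hB1, hB2, hB3⟩ := hφ.2.2.2.2
  by_cases hbr : ∃ c ∈ B, ∃ k : ℤ, c + (k:ℝ) = x
  · obtain ⟨c, hc, k, hck⟩ := hbr
    rw [← hck]
    exact dyadic_add (hB2 c hc) (dyadic_int k)
  · push_neg at hbr
    obtain ⟨ε, hε, hfree⟩ := exists_free_around B x hbr
    obtain ⟨d, hdd, hd⟩ := exists_dyadic_mem_Ioo (show x - ε < x by linarith)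
    obtain ⟨n, hn⟩ := hB3 (x - ε) (x + ε) (by linarith) hfree
    have hxm : x ∈ Set.Ioo (x - ε) (x + ε) := ⟨by linarith, by linarith⟩
    have hdm : d ∈ Set.Ioo (x - ε) (x + ε) := ⟨hd.1, by linarith [hd.2]⟩
    have key := hn x hxm d hdm
    have hexp : (-n) + n = 0 := by ring
    have h2n : (2:ℝ)^(-n) * ((2:ℝ)^n * (x - d)) = x - d := by
      rw [← mul_assoc, ← zpow_add₀ (by norm_num : (2:ℝ) ≠ 0), hexp, zpow_zero, one_mul]
    have hx2 : x = d + (2:ℝ)^(-n) * (φ x - φ d) := by rw [key, h2n]; ring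
    rw [hx2]
    exact dyadic_add hdd (dyadic_zpow_mul (-n) (dyadic_sub hx (dyadic_image hφ hdd)))

lemma comp_lift {φ ψ : ℝ → ℝ} (hφ : IsPDALift φ) (hψ : IsPDALift ψ) :
    IsPDALift (ψ ∘ φ) := by
  obtain ⟨Bφ, hBφ1, hBφ2, hBφ3⟩ := hφ.2.2.2.2
  obtain ⟨Bψ, hBψ1, hBψ2, hBψ3⟩ := hψ.2.2.2.2
  set e := hφ.1.orderIsoOfSurjective φ hφ.2.1 with he
  have heapp : ∀ x, e x = φ x := fun _ => rfl
  have hinv1 : ∀ t, φ (e.symm t) = t := fun t => e.apply_symm_apply t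
  have hinv2 : ∀ x, e.symm (φ x) = x := fun x => e.symm_apply_apply x
  have hinv_add : ∀ t : ℝ, ∀ k : ℤ, e.symm (t + k) = e.symm t + k := by
    intro t k
    apply hφ.1.injective
    rw [lift_add_int hφ (e.symm t) k, hinv1, hinv1]
  refine ⟨hψ.1.comp hφ.1, hψ.2.1.comp hφ.2.1, ?_, ?_, ?_⟩
  · intro x
    simp only [Function.comp_apply]
    rw [hφ.2.2.1 x, hψ.2.2.1 (φ x)]
  · exact dyadic_image hψ hφ.2.2.2.1
  · set kb : ℝ → ℤ := fun b => ⌈φ 0 - b⌉ with hkb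
    set c : ℝ → ℝ := fun b => e.symm (b + kb b) with hc
    have hφ1 : φ 1 = φ 0 + 1 := by
      have := hφ.2.2.1 0
      rw [zero_add] at this
      exact this
    have hcb_mem : ∀ b ∈ Bψ, c b ∈ Set.Ico (0:ℝ) 1 := by
      intro b hb
      have hlo : φ 0 ≤ b + kb b := by
        have := Int.le_ceil (φ 0 - b)
        simp only [hkb]
        linarith
      have hhi : b + (kb b : ℝ) < φ 0 + 1 := by
        have := Int.ceil_lt_add_one (φ 0 - b)
        simp only [hkb]
        linarith
      constructor
      · have : e.symm (φ 0) ≤ e.symm (b + kb b) := e.symm.monotone hlo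
        rw [hinv2 0] at this
        exact this
      · have : e.symm (b + kb b) < e.symm (φ 1) := by
          apply e.symm.strictMono
          rw [hφ1]; exact hhi
        rw [hinv2 1] at this
        exact this
    refine ⟨Bφ ∪ Bψ.image c, ?_, ?_, ?_⟩
    · intro x hx
      rcases Finset.mem_union.mp hx with h | h
      · exact hBφ1 h
      · obtain ⟨b, hb, rfl⟩ := Finset.mem_image.mp h
        exact hcb_mem b hb
    · intro x hx
      rcases Finset.mem_union.mp hx with h | h
      · exact hBφ2 x h
      · obtain ⟨b, hb, rfl⟩ := Finset.mem_image.mp h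
        apply dyadic_preimage hφ
        rw [hc]
        simp only []
        rw [hinv1]
        exact dyadic_add (hBψ2 b hb) (dyadic_int _)
    · intro u v huv hfree
      have hfreeφ : ∀ cc ∈ Bφ, ∀ k : ℤ, cc + (k:ℝ) ∉ Set.Ioo u v := by
        intro cc hcc k
        exact hfree cc (Finset.mem_union_left _ hcc) k
      obtain ⟨n, hn⟩ := hBφ3 u v huv hfreeφ
      have huv' : φ u < φ v := hφ.1 huv
      have hfreeψ : ∀ b ∈ Bψ, ∀ k : ℤ, b + (k:ℝ) ∉ Set.Ioo (φ u) (φ v) := by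
        intro b hb k hk
        have hmem : e.symm (b + k) ∈ Set.Ioo u v := by
          constructor
          · have : e.symm (φ u) < e.symm (b + k) := e.symm.strictMono hk.1
            rw [hinv2 u] at this; exact this
          · have : e.symm (b + k) < e.symm (φ v) := e.symm.strictMono hk.2
            rw [hinv2 v] at this; exact this
        have hrw : e.symm (b + (k:ℝ)) = c b + ((k - kb b : ℤ) : ℝ) := by
          have : b + (k:ℝ) = (b + kb b) + ((k - kb b : ℤ) : ℝ) := by push_cast; ring
          rw [this, hinv_add]
        rw [hrw] at hmem
        exact hfree (c b) (Finset.mem_union_right _ (Finset.mem_image_of_mem c hb))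
          (k - kb b) hmem
      obtain ⟨m, hm⟩ := hBψ3 (φ u) (φ v) huv' hfreeψ
      refine ⟨m + n, ?_⟩
      intro x hx y hy
      have hφx : φ x ∈ Set.Ioo (φ u) (φ v) := ⟨hφ.1 hx.1, hφ.1 hx.2⟩
      have hφy : φ y ∈ Set.Ioo (φ u) (φ v) := ⟨hφ.1 hy.1, hφ.1 hy.2⟩
      have h1 := hm (φ x) hφx (φ y) hφy
      have h2 := hn x hx y hy
      simp only [Function.comp_apply]
      rw [h1, h2, ← mul_assoc, ← zpow_add₀ (by norm_num : (2:ℝ) ≠ 0)]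

lemma isPDA_trans {g h : Homeomorph Circle𝕋 Circle𝕋} (hg : IsPDA g) (hh : IsPDA h) :
    IsPDA (h.trans g) := by
  obtain ⟨ψ, hψ, hlg⟩ := hg
  obtain ⟨φ, hφ, hlh⟩ := hh
  refine ⟨ψ ∘ φ, comp_lift hφ hψ, ?_⟩
  intro x
  simp only [Homeomorph.trans_apply, Function.comp_apply]
  rw [hlh x, hlg (φ x)]

lemma hasRightSlope_comp {g h : Homeomorph Circle𝕋 Circle𝕋} {x : Circle𝕋} {n m : ℤ}
    (hhs : HasRightSlope h x n) (hgs : HasRightSlope g (h x) m) :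
    HasRightSlope (h.trans g) x (m + n) := by
  obtain ⟨r, φ, hφ, hlh, hrx, ε, hε, haff⟩ := hhs
  obtain ⟨s, ψ, hψ, hlg, hsx, δ, hδ, haff'⟩ := hgs
  have hφr : ((φ r : ℝ) : Circle𝕋) = h x := by rw [← hlh r, hrx]
  obtain ⟨j, hj⟩ := sub_int_of_coe_eq (hsx.trans hφr.symm)
  have hshift : ∀ t : ℝ, ψ t = ψ (t - j) + j := by
    intro t
    have := lift_add_int hψ (t - j) j
    rw [show t - (j:ℝ) + (j:ℝ) = t by ring] at this
    linarith
  have hψφr : ψ (φ r) = ψ s + j := by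
    rw [hshift (φ r), hj]
    simp
  have haffψ : ∀ t ∈ Set.Icc (φ r) (φ r + δ), ψ t = ψ (φ r) + (2:ℝ)^m * (t - φ r) := by
    intro t ht
    have h1 : t - j ∈ Set.Icc s (s + δ) := by
      constructor
      · have := ht.1; rw [hj] at this; linarith
      · have := ht.2; rw [hj] at this; linarith
    have e1 := haff' (t - j) h1
    rw [hshift t, e1, hψφr, hj]
    ring
  have h2npos : (0:ℝ) < (2:ℝ)^n := by positivity
  set ε' : ℝ := min ε (δ * (2:ℝ)^(-n)) with hε'
  have hε'pos : 0 < ε' := lt_min hε (by positivity)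
  have hkey : (2:ℝ)^n * ε' ≤ δ := by
    have h1 : ε' ≤ δ * (2:ℝ)^(-n) := min_le_right _ _
    have h2 : (2:ℝ)^n * (δ * (2:ℝ)^(-n)) = δ := by
      rw [mul_comm (δ) _, ← mul_assoc, ← zpow_add₀ (by norm_num : (2:ℝ) ≠ 0),
        show n + (-n) = 0 by ring, zpow_zero, one_mul]
    nlinarith
  refine ⟨r, ψ ∘ φ, comp_lift hφ hψ, ?_, hrx, ε', hε'pos, ?_⟩
  · intro y
    simp only [Homeomorph.trans_apply, Function.comp_apply]
    rw [hlh y, hlg (φ y)]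
  · intro y hy
    have hyε : y ∈ Set.Icc r (r + ε) := ⟨hy.1, by have := min_le_left ε (δ * (2:ℝ)^(-n)); have := hy.2; simp only [hε'] at *; linarith⟩
    have hφy := haff y hyε
    have hφymem : φ y ∈ Set.Icc (φ r) (φ r + δ) := by
      constructor
      · rw [hφy]; nlinarith [hy.1]
      · rw [hφy]
        have hyr : y - r ≤ ε' := by linarith [hy.2]
        have : (2:ℝ)^n * (y - r) ≤ (2:ℝ)^n * ε' := by nlinarith [hy.1]
        linarith
    have := haffψ (φ y) hφymem
    simp only [Function.comp_apply]
    rw [this, hφy]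
    rw [zpow_add₀ (by norm_num : (2:ℝ) ≠ 0)]
    ring

lemma hasLeftSlope_comp {g h : Homeomorph Circle𝕋 Circle𝕋} {x : Circle𝕋} {n m : ℤ}
    (hhs : HasLeftSlope h x n) (hgs : HasLeftSlope g (h x) m) :
    HasLeftSlope (h.trans g) x (m + n) := by
  obtain ⟨r, φ, hφ, hlh, hrx, ε, hε, haff⟩ := hhs
  obtain ⟨s, ψ, hψ, hlg, hsx, δ, hδ, haff'⟩ := hgs
  have hφr : ((φ r : ℝ) : Circle𝕋) = h x := by rw [← hlh r, hrx]
  obtain ⟨j, hj⟩ := sub_int_of_coe_eq (hsx.trans hφr.symm)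
  have hshift : ∀ t : ℝ, ψ t = ψ (t - j) + j := by
    intro t
    have := lift_add_int hψ (t - j) j
    rw [show t - (j:ℝ) + (j:ℝ) = t by ring] at this
    linarith
  have hψφr : ψ (φ r) = ψ s + j := by
    rw [hshift (φ r), hj]
    simp
  have haffψ : ∀ t ∈ Set.Icc (φ r - δ) (φ r), ψ t = ψ (φ r) + (2:ℝ)^m * (t - φ r) := by
    intro t ht
    have h1 : t - j ∈ Set.Icc (s - δ) s := by
      constructor
      · have := ht.1; rw [hj] at this; linarith
      · have := ht.2; rw [hj] at this; linarith
    have e1 := haff' (t - j) h1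
    rw [hshift t, e1, hψφr, hj]
    ring
  have h2npos : (0:ℝ) < (2:ℝ)^n := by positivity
  set ε' : ℝ := min ε (δ * (2:ℝ)^(-n)) with hε'
  have hε'pos : 0 < ε' := lt_min hε (by positivity)
  have hkey : (2:ℝ)^n * ε' ≤ δ := by
    have h1 : ε' ≤ δ * (2:ℝ)^(-n) := min_le_right _ _
    have h2 : (2:ℝ)^n * (δ * (2:ℝ)^(-n)) = δ := by
      rw [mul_comm (δ) _, ← mul_assoc, ← zpow_add₀ (by norm_num : (2:ℝ) ≠ 0),
        show n + (-n) = 0 by ring, zpow_zero, one_mul]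
    nlinarith
  refine ⟨r, ψ ∘ φ, comp_lift hφ hψ, ?_, hrx, ε', hε'pos, ?_⟩
  · intro y
    simp only [Homeomorph.trans_apply, Function.comp_apply]
    rw [hlh y, hlg (φ y)]
  · intro y hy
    have hyε : y ∈ Set.Icc (r - ε) r := ⟨by have := min_le_left ε (δ * (2:ℝ)^(-n)); have := hy.1; simp only [hε'] at *; linarith, hy.2⟩
    have hφy := haff y hyε
    have hφymem : φ y ∈ Set.Icc (φ r - δ) (φ r) := by
      constructor
      · rw [hφy]
        have hyr : r - y ≤ ε' := by linarith [hy.1]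
        have : (2:ℝ)^n * (r - y) ≤ (2:ℝ)^n * ε' := by nlinarith [hy.2]
        nlinarith
      · rw [hφy]; nlinarith [hy.2]
    have := haffψ (φ y) hφymem
    simp only [Function.comp_apply]
    rw [this, hφy]
    rw [zpow_add₀ (by norm_num : (2:ℝ) ≠ 0)]
    ring

lemma logRightDeriv_eq {g : Homeomorph Circle𝕋 Circle𝕋} {x : Circle𝕋} {n : ℤ}
    (h : HasRightSlope g x n) : logRightDeriv g x = n := by
  have hex : ∃ n, HasRightSlope g x n := ⟨n, h⟩
  rw [logRightDeriv, dif_pos hex]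
  exact rightSlope_unique hex.choose_spec h

lemma logLeftDeriv_eq {g : Homeomorph Circle𝕋 Circle𝕋} {x : Circle𝕋} {n : ℤ}
    (h : HasLeftSlope g x n) : logLeftDeriv g x = n := by
  have hex : ∃ n, HasLeftSlope g x n := ⟨n, h⟩
  rw [logLeftDeriv, dif_pos hex]
  exact leftSlope_unique hex.choose_spec h

lemma logRightDeriv_comp {g h : Homeomorph Circle𝕋 Circle𝕋} (hg : IsPDA g) (hh : IsPDA h)
    (x : Circle𝕋) :
    logRightDeriv (h.trans g) x = logRightDeriv g (h x) + logRightDeriv h x := by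
  obtain ⟨n, hn⟩ := exists_rightSlope hh x
  obtain ⟨m, hm⟩ := exists_rightSlope hg (h x)
  rw [logRightDeriv_eq hn, logRightDeriv_eq hm, logRightDeriv_eq (hasRightSlope_comp hn hm)]

lemma logLeftDeriv_comp {g h : Homeomorph Circle𝕋 Circle𝕋} (hg : IsPDA g) (hh : IsPDA h)
    (x : Circle𝕋) :
    logLeftDeriv (h.trans g) x = logLeftDeriv g (h x) + logLeftDeriv h x := by
  obtain ⟨n, hn⟩ := exists_leftSlope hh x
  obtain ⟨m, hm⟩ := exists_leftSlope hg (h x)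
  rw [logLeftDeriv_eq hn, logLeftDeriv_eq hm, logLeftDeriv_eq (hasLeftSlope_comp hn hm)]

lemma deltaLog_comp {g h : Homeomorph Circle𝕋 Circle𝕋} (hg : IsPDA g) (hh : IsPDA h)
    (x : Circle𝕋) :
    deltaLog (h.trans g) x = deltaLog g (h x) + deltaLog h x := by
  simp only [deltaLog, logRightDeriv_comp hg hh, logLeftDeriv_comp hg hh]
  ring

lemma deltaLog_finite {g : Homeomorph Circle𝕋 Circle𝕋} (hg : IsPDA g) :
    {x : Circle𝕋 | deltaLog g x ≠ 0}.Finite := by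
  obtain ⟨φ, hφ, hl⟩ := hg
  obtain ⟨B, hB1, hB2, hB3⟩ := hφ.2.2.2.2
  apply Set.Finite.subset ((B.finite_toSet).image (fun c => ((c : ℝ) : Circle𝕋)))
  intro x hx
  by_contra hximg
  apply hx
  obtain ⟨r, hr⟩ : ∃ r : ℝ, ((r:ℝ):Circle𝕋) = x := Quotient.exists_rep x
  have hnb : ∀ c ∈ B, ∀ k : ℤ, c + (k:ℝ) ≠ r := by
    intro c hc k hck
    exact hximg ⟨c, hc, by rw [← hr, ← hck, coe_add_int]⟩
  obtain ⟨ε, hε, hfree⟩ := exists_free_around B r hnb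
  obtain ⟨n, hn⟩ := hB3 (r - ε) (r + ε) (by linarith) hfree
  have haff := affine_Icc (lift_continuous hφ) (show r - ε < r + ε by linarith) hn
  have hrmem : r ∈ Set.Icc (r - ε) (r + ε) := ⟨by linarith, by linarith⟩
  have hright : HasRightSlope g x n := ⟨r, φ, hφ, hl, hr, ε, hε, fun y hy => by
    have := haff y ⟨by linarith [hy.1], hy.2⟩ r hrmem
    linarith⟩
  have hleft : HasLeftSlope g x n := ⟨r, φ, hφ, hl, hr, ε, hε, fun y hy => by
    have := haff y ⟨hy.1, by linarith [hy.2]⟩ r hrmem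
    linarith⟩
  simp [deltaLog, logRightDeriv_eq hright, logLeftDeriv_eq hleft]

lemma gvSummand_finite {g h : Homeomorph Circle𝕋 Circle𝕋} (hg : IsPDA g) (hh : IsPDA h) :
    {x : Circle𝕋 | gvSummand g h x ≠ 0}.Finite := by
  apply Set.Finite.subset ((deltaLog_finite hh).union (deltaLog_finite (isPDA_trans hg hh)))
  intro x hx
  by_contra hc
  simp only [Set.mem_union, Set.mem_setOf_eq, not_or, not_not] at hc
  exact hx (by simp [gvSummand, hc.1, hc.2])

lemma gvSummand_eq {g h : Homeomorph Circle𝕋 Circle𝕋} (hg : IsPDA g) (hh : IsPDA h)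
    (x : Circle𝕋) :
    gvSummand g h x
      = logRightDeriv h x * deltaLog g (h x) - deltaLog h x * logRightDeriv g (h x) := by
  rw [gvSummand, deltaLog_comp hg hh, logRightDeriv_comp hg hh]
  ring

lemma key_identity {g h k : Homeomorph Circle𝕋 Circle𝕋}
    (hg : IsPDA g) (hh : IsPDA h) (hk : IsPDA k) (x : Circle𝕋) :
    gvSummand h k x - gvSummand (h.trans g) k x + gvSummand g (k.trans h) x
      = gvSummand g h (k x) := by
  have hgh := isPDA_trans hg hh
  have hhk := isPDA_trans hh hk
  rw [gvSummand_eq hh hk x, gvSummand_eq hgh hk x, gvSummand_eq hg hhk x,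
      gvSummand_eq hg hh (k x)]
  rw [deltaLog_comp hg hh (k x), logRightDeriv_comp hg hh (k x),
      deltaLog_comp hh hk x, logRightDeriv_comp hh hk x]
  simp only [Homeomorph.trans_apply]
  ring

end GVAux

/-- For `g, h` in Thompson's group `T` the summand of `gv(g,h)` vanishes for all but finitely
many `x ∈ 𝕋`, so that `gv(g,h)` is a well-defined integer, and `gv` is a 2-cocycle on `T`
for the trivial action of `T` on `ℤ`:
`gv(h,k) − gv(g∘h, k) + gv(g, h∘k) − gv(g,h) = 0`. -/
theorem gv_welldefined_and_cocycle :
    (∀ g h : Homeomorph Circle𝕋 Circle𝕋, IsPDA g → IsPDA h →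
      {x : Circle𝕋 | gvSummand g h x ≠ 0}.Finite) ∧
    (∀ g h k : Homeomorph Circle𝕋 Circle𝕋, IsPDA g → IsPDA h → IsPDA k →
      gv h k - gv (h.trans g) k + gv g (k.trans h) - gv g h = 0) := by
  constructor
  · intro g h hg hh
    exact GVAux.gvSummand_finite hg hh
  · intro g h k hg hh hk
    have hgh := GVAux.isPDA_trans hg hh
    have hhk := GVAux.isPDA_trans hh hk
    have f1 : (Function.support fun x => gvSummand h k x).Finite := GVAux.gvSummand_finite hh hk
    have f2 : (Function.support fun x => gvSummand (h.trans g) k x).Finite :=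
      GVAux.gvSummand_finite hgh hk
    have f3 : (Function.support fun x => gvSummand g (k.trans h) x).Finite :=
      GVAux.gvSummand_finite hg hhk
    have f12 : (Function.support fun x =>
        gvSummand h k x - gvSummand (h.trans g) k x).Finite := by
      apply (f1.union f2).subset
      intro x hx
      by_contra hc
      simp only [Set.mem_union, Function.mem_support, not_or, not_not] at hc
      simp only [Function.mem_support] at hx
      exact hx (by rw [hc.1, hc.2]; ring)
    have e2 : gv h k - gv (h.trans g) k + gv g (k.trans h)
        = ∑ᶠ x, (gvSummand h k x - gvSummand (h.trans g) k x + gvSummand g (k.trans h) x) := by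
      simp only [gv]
      rw [← finsum_sub_distrib f1 f2, ← finsum_add_distrib f12 f3]
    have e3 : ∑ᶠ x, (gvSummand h k x - gvSummand (h.trans g) k x + gvSummand g (k.trans h) x)
        = ∑ᶠ x, gvSummand g h (k x) := finsum_congr (GVAux.key_identity hg hh hk)
    have e4 : ∑ᶠ x, gvSummand g h (k x) = gv g h := by
      simp only [gv]
      exact finsum_comp_equiv k.toEquiv
    rw [e2, e3, e4, sub_self]
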